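/- Let X_i, i ≥ 1, be independent random variables with X_i ~ Poisson(N (i+k)^{−α}) for parameters α > 1, N > 0 and k ≥ 0 (the Zipf–Mandelbrot–Poisson ensemble). Then for every integer n ≥ 2, the probability that the first n ranks are not in strictly decreasing order satisfies 1 − Pr(X_1 > X_2 > … > X_n) ≤ Σ_{i=1}^{n−1} exp(−N ((i+k)^{−α/2} − (i+k+1)^{−α/2})²). -/

import Mathlib

open MeasureTheory ProbabilityTheory

lemma exp_hasSum (c : ℝ) : HasSum (fun a : ℕ => c ^ a / a.factorial) (Real.exp c) := by
  rw [Real.exp_eq_exp_ℝ]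
  exact NormedSpace.expSeries_div_hasSum_exp c

lemma skellam_bound {Ω : Type*} [MeasurableSpace Ω] (P : Measure Ω)
    (Xf Yf : Ω → ℕ) (hXY : IndepFun Xf Yf P) (lam mu : ℝ) (hmu : 0 < mu) (hle : mu ≤ lam)
    (hX : ∀ j : ℕ, P {ω | Xf ω = j} =
      ENNReal.ofReal (Real.exp (-lam) * lam ^ j / j.factorial))
    (hY : ∀ j : ℕ, P {ω | Yf ω = j} =
      ENNReal.ofReal (Real.exp (-mu) * mu ^ j / j.factorial)) :
    P {ω | Xf ω ≤ Yf ω} ≤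
      ENNReal.ofReal (Real.exp (2 * Real.sqrt (lam * mu) - lam - mu)) := by
  have hlam : 0 < lam := lt_of_lt_of_le hmu hle
  set c : ℝ := Real.sqrt (lam * mu) with hc
  have hc0 : 0 ≤ c := Real.sqrt_nonneg _
  have hmuc : mu ≤ c := by
    rw [hc]
    nlinarith [Real.sq_sqrt (mul_nonneg hlam.le hmu.le), Real.sqrt_nonneg (lam*mu),
      Real.sqrt_le_sqrt (show mu * mu ≤ lam * mu by nlinarith),
      Real.sqrt_mul_self hmu.le]
  have hcc : c * c = lam * mu := Real.mul_self_sqrt (by positivity)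
  set g1 : ℕ → ℝ := fun a => Real.exp (-lam) * c ^ a / a.factorial with hg1
  set g2 : ℕ → ℝ := fun b => Real.exp (-mu) * c ^ b / b.factorial with hg2
  have hg10 : ∀ a, 0 ≤ g1 a := fun a => by rw [hg1]; positivity
  have hg20 : ∀ b, 0 ≤ g2 b := fun b => by rw [hg2]; positivity
  have hs1 : HasSum g1 (Real.exp (-lam) * Real.exp c) := by
    simpa [hg1, mul_div_assoc] using (exp_hasSum c).mul_left (Real.exp (-lam))
  have hs2 : HasSum g2 (Real.exp (-mu) * Real.exp c) := by
    simpa [hg2, mul_div_assoc] using (exp_hasSum c).mul_left (Real.exp (-mu))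
  set C : ℕ × ℕ → Set Ω := fun p =>
    if p.1 ≤ p.2 then {ω | Xf ω = p.1} ∩ {ω | Yf ω = p.2} else ∅ with hC
  have hsub : {ω | Xf ω ≤ Yf ω} ⊆ ⋃ p, C p := by
    intro ω hω
    refine Set.mem_iUnion.2 ⟨(Xf ω, Yf ω), ?_⟩
    have : C (Xf ω, Yf ω) = {ω' | Xf ω' = Xf ω} ∩ {ω' | Yf ω' = Yf ω} := by
      rw [hC]; exact if_pos hω
    rw [this]
    exact ⟨rfl, rfl⟩
  have key : ∀ p, P (C p) ≤ ENNReal.ofReal (g1 p.1 * g2 p.2) := by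
    rintro ⟨a, b⟩
    by_cases hab : a ≤ b
    · have hCp : P (C (a, b)) = P {ω | Xf ω = a} * P {ω | Yf ω = b} := by
        have h1 : C (a, b) = {ω | Xf ω = a} ∩ {ω | Yf ω = b} := by
          rw [hC]; exact if_pos hab
        rw [h1]
        have := hXY.measure_inter_preimage_eq_mul {a} {b}
          (measurableSet_singleton a) (measurableSet_singleton b)
        simpa [Set.preimage] using this
      rw [hCp, hX, hY, ← ENNReal.ofReal_mul (by positivity)]
      apply ENNReal.ofReal_le_ofReal
      have hpow : lam ^ a * mu ^ b ≤ c ^ a * c ^ b := by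
        calc lam ^ a * mu ^ b = (lam * mu) ^ a * mu ^ (b - a) := by
              rw [mul_pow, mul_assoc, ← pow_add, Nat.add_sub_cancel' hab]
          _ ≤ (c * c) ^ a * c ^ (b - a) := by
              rw [hcc]
              exact mul_le_mul_of_nonneg_left (pow_le_pow_left₀ hmu.le hmuc _) (by positivity)
          _ = c ^ a * c ^ b := by
              rw [mul_pow, mul_assoc, ← pow_add, Nat.add_sub_cancel' hab]
      have e1 : Real.exp (-lam) * lam ^ a / a.factorial * (Real.exp (-mu) * mu ^ b / b.factorial)
          = Real.exp (-lam) * Real.exp (-mu) * (lam ^ a * mu ^ b) / (a.factorial * b.factorial) := by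
        ring
      have e2 : g1 a * g2 b
          = Real.exp (-lam) * Real.exp (-mu) * (c ^ a * c ^ b) / (a.factorial * b.factorial) := by
        rw [hg1, hg2]; ring
      rw [e1, e2]
      gcongr
    · have : C (a, b) = ∅ := by rw [hC]; exact if_neg hab
      rw [this]
      simp [mul_nonneg (hg10 a) (hg20 b)]
  calc P {ω | Xf ω ≤ Yf ω} ≤ P (⋃ p, C p) := measure_mono hsub
    _ ≤ ∑' p, P (C p) := measure_iUnion_le _
    _ ≤ ∑' p : ℕ × ℕ, ENNReal.ofReal (g1 p.1 * g2 p.2) := ENNReal.tsum_le_tsum key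
    _ = (∑' a, ENNReal.ofReal (g1 a)) * (∑' b, ENNReal.ofReal (g2 b)) := by
        rw [show (∑' p : ℕ × ℕ, ENNReal.ofReal (g1 p.1 * g2 p.2))
            = ∑' a, ∑' b, ENNReal.ofReal (g1 a * g2 b) from ENNReal.tsum_prod (f := fun a b => ENNReal.ofReal (g1 a * g2 b))]
        have hmul : ∀ a b : ℕ, ENNReal.ofReal (g1 a * g2 b)
            = ENNReal.ofReal (g1 a) * ENNReal.ofReal (g2 b) :=
          fun a b => ENNReal.ofReal_mul (hg10 a)
        simp_rw [hmul, ENNReal.tsum_mul_left, ENNReal.tsum_mul_right]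
    _ = ENNReal.ofReal (Real.exp (2 * c - lam - mu)) := by
        rw [← ENNReal.ofReal_tsum_of_nonneg hg10 hs1.summable,
          ← ENNReal.ofReal_tsum_of_nonneg hg20 hs2.summable,
          hs1.tsum_eq, hs2.tsum_eq,
          ← ENNReal.ofReal_mul (by positivity)]
        congr 1
        rw [← Real.exp_add, ← Real.exp_add, ← Real.exp_add]
        ring_nf


/-- The Zipf–Mandelbrot–Poisson ensemble with parameters `α > 1`, `N > 0` and shift
`k ≥ 0`: the random variables `X i`, for integers `i ≥ 1`, are independent and
`X i ~ Poisson(N * (i + k)^(-α))`. -/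
def IsZipfMandelbrotPoisson {Ω : Type*} [MeasurableSpace Ω] (P : Measure Ω)
    (X : ℕ → Ω → ℕ) (α N k : ℝ) : Prop :=
  iIndepFun (fun i : {i : ℕ // 1 ≤ i} => X i) P ∧
  ∀ i : ℕ, 1 ≤ i → ∀ j : ℕ,
    P {ω | X i ω = j} =
      ENNReal.ofReal (Real.exp (-(N * ((i : ℝ) + k) ^ (-α))) *
        (N * ((i : ℝ) + k) ^ (-α)) ^ j / (Nat.factorial j))

/-- For the Zipf–Mandelbrot–Poisson ensemble with `α > 1`, `N > 0`, `k ≥ 0` and any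
integer `n ≥ 2`, the probability that the first `n` ranks are not in strictly
decreasing order is at most
`∑_{i=1}^{n-1} exp(-N ((i+k)^(-α/2) - (i+k+1)^(-α/2))²)`. -/
theorem zipf_mandelbrot_poisson_order_bound
    {Ω : Type*} [MeasurableSpace Ω] (P : Measure Ω) [IsProbabilityMeasure P]
    (X : ℕ → Ω → ℕ) (α N k : ℝ) (hα : 1 < α) (hN : 0 < N) (hk : 0 ≤ k)
    (hzp : IsZipfMandelbrotPoisson P X α N k) (n : ℕ) (hn : 2 ≤ n) :
    1 - P {ω | ∀ i : ℕ, 1 ≤ i → i < n → X (i + 1) ω < X i ω} ≤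
      ENNReal.ofReal
        (∑ i ∈ Finset.Ico 1 n,
          Real.exp (-N * (((i : ℝ) + k) ^ (-α / 2) - ((i : ℝ) + k + 1) ^ (-α / 2)) ^ 2)) := by
  set A := {ω | ∀ i : ℕ, 1 ≤ i → i < n → X (i + 1) ω < X i ω} with hA
  set B : ℕ → Set Ω := fun i => {ω | X i ω ≤ X (i + 1) ω} with hB
  -- step 1 : 1 - P A ≤ P Aᶜ
  have step1 : 1 - P A ≤ P Aᶜ := by
    rw [tsub_le_iff_right]
    calc (1 : ENNReal) = P Set.univ := (measure_univ).symm
      _ = P (Aᶜ ∪ A) := by rw [Set.compl_union_self]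
      _ ≤ P Aᶜ + P A := measure_union_le _ _
  -- step 2 : Aᶜ ⊆ ⋃ i ∈ Ico 1 n, B i
  have hsub : Aᶜ ⊆ ⋃ i ∈ Finset.Ico 1 n, B i := by
    intro ω hω
    simp only [hA, Set.mem_compl_iff, Set.mem_setOf_eq, not_forall] at hω
    obtain ⟨i, hi1, hin, hlt⟩ := hω
    refine Set.mem_biUnion (Finset.mem_Ico.2 ⟨hi1, hin⟩) ?_
    exact Nat.le_of_not_lt hlt
  have step2 : P Aᶜ ≤ ∑ i ∈ Finset.Ico 1 n, P (B i) :=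
    le_trans (measure_mono hsub) (measure_biUnion_finset_le _ _)
  -- step 3 : per-term bound
  have step3 : ∀ i ∈ Finset.Ico 1 n, P (B i) ≤
      ENNReal.ofReal
        (Real.exp (-N * (((i : ℝ) + k) ^ (-α / 2) - ((i : ℝ) + k + 1) ^ (-α / 2)) ^ 2)) := by
    intro i hi
    have hi1 : 1 ≤ i := (Finset.mem_Ico.1 hi).1
    set x : ℝ := (i : ℝ) + k with hx
    have hx0 : 0 < x := by positivity
    have hx10 : 0 < x + 1 := by positivity
    set lam : ℝ := N * x ^ (-α) with hlam
    set mu : ℝ := N * (x + 1) ^ (-α) with hmudef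
    have hlam0 : 0 < lam := by rw [hlam]; positivity
    have hmu0 : 0 < mu := by rw [hmudef]; positivity
    have hle : mu ≤ lam := by
      rw [hmudef, hlam]
      have : (x + 1) ^ (-α) ≤ x ^ (-α) := by
        rw [Real.rpow_neg hx0.le, Real.rpow_neg hx10.le]
        exact inv_anti₀ (Real.rpow_pos_of_pos hx0 _)
          (Real.rpow_le_rpow hx0.le (by linarith) (by linarith))
      exact mul_le_mul_of_nonneg_left this hN.le
    -- independence
    have hind : IndepFun (X i) (X (i + 1)) P := by
      have := hzp.1.indepFun (i := ⟨i, hi1⟩) (j := ⟨i + 1, by omega⟩)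
        (by simp [Subtype.ext_iff])
      exact this
    have hXi : ∀ j : ℕ, P {ω | X i ω = j} =
        ENNReal.ofReal (Real.exp (-lam) * lam ^ j / j.factorial) := by
      intro j
      have := hzp.2 i hi1 j
      rw [this]
    have hYi : ∀ j : ℕ, P {ω | X (i + 1) ω = j} =
        ENNReal.ofReal (Real.exp (-mu) * mu ^ j / j.factorial) := by
      intro j
      have := hzp.2 (i + 1) (by omega) j
      rw [this]
      congr 2 <;> push_cast <;> rw [hmudef, hx] <;> ring_nf
    have hb := skellam_bound P (X i) (X (i + 1)) hind lam mu hmu0 hle hXi hYi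
    refine le_trans hb (le_of_eq ?_)
    congr 1
    -- identify exponents
    set a : ℝ := x ^ (-α / 2) with ha
    set b : ℝ := (x + 1) ^ (-α / 2) with hbb
    have ha0 : 0 ≤ a := Real.rpow_nonneg hx0.le _
    have hb0 : 0 ≤ b := Real.rpow_nonneg hx10.le _
    have hasq : a ^ 2 = x ^ (-α) := by
      rw [ha, ← Real.rpow_natCast (x ^ (-α/2)) 2, ← Real.rpow_mul hx0.le]
      norm_num
    have hbsq : b ^ 2 = (x + 1) ^ (-α) := by
      rw [hbb, ← Real.rpow_natCast ((x+1) ^ (-α/2)) 2, ← Real.rpow_mul hx10.le]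
      norm_num
    have hsqrt : Real.sqrt (lam * mu) = N * (a * b) := by
      have : lam * mu = (N * (a * b)) ^ 2 := by
        rw [hlam, hmudef, ← hasq, ← hbsq]; ring
      rw [this, Real.sqrt_sq (by positivity)]
    rw [hsqrt, hlam, hmudef, ← hasq, ← hbsq]
    congr 1
    ring
  -- combine
  have step4 : ∑ i ∈ Finset.Ico 1 n, P (B i) ≤
      ENNReal.ofReal
        (∑ i ∈ Finset.Ico 1 n,
          Real.exp (-N * (((i : ℝ) + k) ^ (-α / 2) - ((i : ℝ) + k + 1) ^ (-α / 2)) ^ 2)) := by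
    rw [ENNReal.ofReal_sum_of_nonneg (fun i _ => (Real.exp_pos _).le)]
    exact Finset.sum_le_sum step3
  exact step1.trans (step2.trans step4)
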